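/- The generalized hypergeometric series ₄F₃(1, 1, 5/2, 3; 2, 21/8, 25/8; 1) equals (221/276480)·( 12584 − 1305·2^{1/4}·π − 2610·2^{1/4}·arcoth(2^{1/4}) + 2610·2^{1/4}·arctan(2^{1/4}) ). -/

import Mathlib

open Real

noncomputable def poch (a : ℝ) (n : ℕ) : ℝ := Polynomial.eval a (ascPochhammer ℝ n)

noncomputable def arcoth (x : ℝ) : ℝ := (1/2) * Real.log ((x + 1)/(x - 1))

namespace HypAux

open MeasureTheory Set intervalIntegral

noncomputable def cc : ℝ := (2:ℝ) ^ ((1:ℝ)/4)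

lemma cc_pos : 0 < cc := Real.rpow_pos_of_pos (by norm_num) _

lemma cc_gt_one : 1 < cc := by
  rw [cc, show (1:ℝ) = (2:ℝ) ^ (0:ℝ) by simp]
  exact Real.rpow_lt_rpow_left_iff (by norm_num) |>.mpr (by norm_num)

lemma cc_pow4 : cc ^ 4 = 2 := by
  rw [cc, ← Real.rpow_natCast ((2:ℝ) ^ ((1:ℝ)/4)) 4, ← Real.rpow_mul (by norm_num)]
  norm_num

/-- The basic beta-type integral. -/
noncomputable def J (m : ℕ) : ℝ := ∫ x in (0:ℝ)..1, x ^ m * (1 - x) ^ ((1:ℝ)/4)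

lemma cont_rpow_quarter : Continuous fun x : ℝ => (1 - x) ^ ((1:ℝ)/4) := by
  rw [continuous_iff_continuousAt]
  intro x
  exact (continuousAt_const.sub continuousAt_id).rpow_const (Or.inr (by norm_num))

lemma cont_integrand (m : ℕ) : Continuous fun x : ℝ => x ^ m * (1 - x) ^ ((1:ℝ)/4) :=
  (continuous_pow m).mul cont_rpow_quarter

lemma J_zero : J 0 = 4/5 := by
  have h : ∀ x ∈ Set.uIcc (0:ℝ) 1,
      HasDerivAt (fun y : ℝ => -(4/5) * (1 - y) ^ ((5:ℝ)/4)) ((x:ℝ) ^ 0 * (1 - x) ^ ((1:ℝ)/4)) x := by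
    intro x _
    have h1 : HasDerivAt (fun y : ℝ => 1 - y) (-1) x := by
      simpa using (hasDerivAt_id' x).const_sub (1:ℝ)
    have h2 := h1.rpow_const (p := (5:ℝ)/4) (Or.inr (by norm_num))
    have h3 := h2.const_mul (-(4/5) : ℝ)
    refine h3.congr_deriv ?_
    rw [show (5:ℝ)/4 - 1 = 1/4 by norm_num]
    ring
  have := intervalIntegral.integral_eq_sub_of_hasDerivAt h ((cont_integrand 0).intervalIntegrable 0 1)
  rw [J, this]
  norm_num

lemma J_rec (m : ℕ) : ((m:ℝ) + 9/4) * J (m+1) = ((m:ℝ) + 1) * J m := by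
  -- F x = x^(m+1) (1-x)^(5/4), F' = (m+1) x^m (1-x)^(5/4) - (5/4) x^(m+1) (1-x)^(1/4)
  set f' : ℝ → ℝ := fun x =>
    ((m:ℝ)+1) * x ^ m * (1 - x) ^ ((5:ℝ)/4) - (5/4) * x ^ (m+1) * (1 - x) ^ ((1:ℝ)/4) with hf'
  have cont54 : Continuous fun x : ℝ => (1 - x) ^ ((5:ℝ)/4) := by
    rw [continuous_iff_continuousAt]
    intro x
    exact (continuousAt_const.sub continuousAt_id).rpow_const (Or.inr (by norm_num))
  have hcont : Continuous f' := by
    apply Continuous.sub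
    · exact (continuous_const.mul (continuous_pow m)).mul cont54
    · exact (continuous_const.mul (continuous_pow (m+1))).mul cont_rpow_quarter
  have h : ∀ x ∈ Set.uIcc (0:ℝ) 1,
      HasDerivAt (fun y : ℝ => y ^ (m+1) * (1 - y) ^ ((5:ℝ)/4)) (f' x) x := by
    intro x _
    have h1 : HasDerivAt (fun y : ℝ => 1 - y) (-1) x := by
      simpa using (hasDerivAt_id' x).const_sub (1:ℝ)
    have h2 := h1.rpow_const (p := (5:ℝ)/4) (Or.inr (by norm_num))
    have h3 := (hasDerivAt_pow (m+1) x).mul h2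
    refine h3.congr_deriv ?_
    rw [hf', show (5:ℝ)/4 - 1 = 1/4 by norm_num]
    push_cast
    ring
  have key := intervalIntegral.integral_eq_sub_of_hasDerivAt h (hcont.intervalIntegrable 0 1)
  have hzero : (∫ x in (0:ℝ)..1, f' x) = 0 := by
    rw [key]
    norm_num
  -- rewrite (1-x)^(5/4) = (1-x) * (1-x)^(1/4) on [0,1]
  have heq : EqOn f'
      (fun x => (((m:ℝ)+1) * (x ^ m * (1-x) ^ ((1:ℝ)/4)) - (((m:ℝ)+1) + 5/4) * (x ^ (m+1) * (1-x) ^ ((1:ℝ)/4))))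
      (Set.uIcc (0:ℝ) 1) := by
    intro x hx
    rw [Set.uIcc_of_le (by norm_num : (0:ℝ) ≤ 1)] at hx
    have hx1 : (0:ℝ) ≤ 1 - x := by linarith [hx.2]
    have h54 : (1 - x) ^ ((5:ℝ)/4) = (1-x) * (1-x) ^ ((1:ℝ)/4) := by
      rw [show (5:ℝ)/4 = 1 + 1/4 by norm_num, Real.rpow_add' hx1 (by norm_num), Real.rpow_one]
    simp only [hf', h54]
    ring
  have h2 : (∫ x in (0:ℝ)..1,
      (((m:ℝ)+1) * (x ^ m * (1-x) ^ ((1:ℝ)/4)) - (((m:ℝ)+1) + 5/4) * (x ^ (m+1) * (1-x) ^ ((1:ℝ)/4)))) = 0 := by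
    rw [← intervalIntegral.integral_congr heq]
    exact hzero
  rw [intervalIntegral.integral_sub, intervalIntegral.integral_const_mul,
    intervalIntegral.integral_const_mul] at h2
  · have : ((m:ℝ)+1) * J m - (((m:ℝ)+1) + 5/4) * J (m+1) = 0 := h2
    linarith [this]
  · exact ((continuous_const.mul (cont_integrand m)).intervalIntegrable 0 1)
  · exact ((continuous_const.mul (cont_integrand (m+1))).intervalIntegrable 0 1)



lemma poch_zero (a : ℝ) : poch a 0 = 1 := by simp [poch]

lemma poch_succ (a : ℝ) (n : ℕ) : poch a (n+1) = poch a n * (a + n) := by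
  simp [poch, ascPochhammer_succ_right]

lemma poch_pos {a : ℝ} (ha : 0 < a) (n : ℕ) : 0 < poch a n := by
  induction n with
  | zero => simp [poch_zero]
  | succ n ih =>
    rw [poch_succ]
    exact mul_pos ih (by positivity)

lemma term_eq (n : ℕ) :
    (poch 1 n * poch 1 n * poch (5/2) n * poch 3 n) /
      (poch 2 n * poch (21/8) n * poch (25/8) n * (Nat.factorial n : ℝ))
    = (3315/1024 * (((n:ℝ)+2)/((n:ℝ)+1))) * J (2*n+3) := by
  induction n with
  | zero =>
    have h3 : J 3 = 512/3315 := by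
      have e1 := J_rec 0
      have e2 := J_rec 1
      have e3 := J_rec 2
      rw [J_zero] at e1
      push_cast at e1 e2 e3
      norm_num at e1 e2 e3
      linarith
    simp [poch_zero, h3]
    norm_num
  | succ n ih =>
    have p1 := (poch_pos one_pos n).ne'
    have p52 := (poch_pos (by norm_num : (0:ℝ) < 5/2) n).ne'
    have p3 := (poch_pos (by norm_num : (0:ℝ) < 3) n).ne'
    have p2 := (poch_pos (by norm_num : (0:ℝ) < 2) n).ne'
    have p218 := (poch_pos (by norm_num : (0:ℝ) < 21/8) n).ne'
    have p258 := (poch_pos (by norm_num : (0:ℝ) < 25/8) n).ne'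
    have pf : (Nat.factorial n : ℝ) ≠ 0 := by positivity
    have hni : ((n:ℝ) + 1) ≠ 0 := by positivity
    have hn2 : ((n:ℝ) + 2) ≠ 0 := by positivity
    have h21 : (2*(n:ℝ)+21/4) ≠ 0 := by positivity
    have h25 : (2*(n:ℝ)+25/4) ≠ 0 := by positivity
    -- J (2n+5) in terms of J (2n+3)
    have hJ : J (2*(n+1)+3) = ((2*(n:ℝ)+4)*(2*(n:ℝ)+5))/((2*(n:ℝ)+21/4)*(2*(n:ℝ)+25/4)) * J (2*n+3) := by
      have e1 := J_rec (2*n+3)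
      have e2 := J_rec (2*n+4)
      push_cast at e1 e2
      have h1 : J (2*n+3+1) = (2*(n:ℝ)+4)/(2*(n:ℝ)+21/4) * J (2*n+3) := by
        field_simp
        linarith [e1]
      have hidx : 2*n+4 = (2*n+3)+1 := by ring
      have hidx2 : 2*(n+1)+3 = (2*n+3+1)+1 := by ring
      rw [hidx] at e2
      rw [h1] at e2
      rw [hidx2]
      field_simp
      field_simp at e2
      linarith [e2]
    rw [Nat.factorial_succ]
    rw [poch_succ 1, poch_succ (5/2), poch_succ 3, poch_succ 2, poch_succ (21/8), poch_succ (25/8)]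
    have key : (poch 1 n * (1+(n:ℝ)) * (poch 1 n * (1+(n:ℝ))) * (poch (5/2) n * (5/2+(n:ℝ))) * (poch 3 n * (3+(n:ℝ)))) /
        ((poch 2 n * (2+(n:ℝ))) * (poch (21/8) n * (21/8+(n:ℝ))) * (poch (25/8) n * (25/8+(n:ℝ))) * (((n+1) * Nat.factorial n : ℕ) : ℝ))
        = (poch 1 n * poch 1 n * poch (5/2) n * poch 3 n) /
            (poch 2 n * poch (21/8) n * poch (25/8) n * (Nat.factorial n : ℝ)) *
          ((1+(n:ℝ))*(5/2+(n:ℝ))*(3+(n:ℝ))/((2+(n:ℝ))*(21/8+(n:ℝ))*(25/8+(n:ℝ)))) := by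
      have hh1 : (1+(n:ℝ)) ≠ 0 := by positivity
      have hh2 : (2+(n:ℝ)) ≠ 0 := by positivity
      have hh3 : (21/8+(n:ℝ)) ≠ 0 := by positivity
      have hh4 : (25/8+(n:ℝ)) ≠ 0 := by positivity
      push_cast
      field_simp
      ring
    rw [key, ih, hJ]
    have hh2 : (2+(n:ℝ)) ≠ 0 := by positivity
    have hh3 : (21/8+(n:ℝ)) ≠ 0 := by positivity
    have hh4 : (25/8+(n:ℝ)) ≠ 0 := by positivity
    push_cast
    field_simp
    ring

noncomputable def G (x : ℝ) : ℝ :=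
  3315/1024 * ((1-x) ^ ((1:ℝ)/4) * (x^3/(1-x^2)) - (1-x) ^ ((1:ℝ)/4) * x * Real.log (1-x^2))

lemma hasSum_fterm {x : ℝ} (hx : x ∈ Set.Ioo (0:ℝ) 1) :
    HasSum (fun n : ℕ => (3315/1024 * (((n:ℝ)+2)/((n:ℝ)+1))) * (x ^ (2*n+3) * (1-x) ^ ((1:ℝ)/4))) (G x) := by
  obtain ⟨hx0, hx1⟩ := hx
  have hx2 : x^2 < 1 := by nlinarith
  have hx2' : (0:ℝ) ≤ x^2 := sq_nonneg x
  have habs : |x^2| < 1 := by rwa [abs_of_nonneg hx2']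
  have h1 : HasSum (fun n : ℕ => (x^2)^n) (1/(1-x^2)) := by
    simpa [one_div] using hasSum_geometric_of_lt_one hx2' hx2
  have h2 : HasSum (fun n : ℕ => (x^2)^(n+1)/((n:ℝ)+1)) (-Real.log (1-x^2)) :=
    Real.hasSum_pow_div_log_of_abs_lt_one habs
  have h1' := (h1.mul_left (3315/1024 * (x^3 * (1-x) ^ ((1:ℝ)/4))))
  have h2' := (h2.mul_left (3315/1024 * (x * (1-x) ^ ((1:ℝ)/4))))
  have h3 := h1'.add h2'
  refine (congrArg₂ (fun (f : ℕ → ℝ) (a : ℝ) => HasSum f a) ?_ ?_).mpr h3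
  · ext n
    have hn : ((n:ℝ)+1) ≠ 0 := by positivity
    rw [pow_add, pow_mul]
    field_simp
    ring
  · unfold G
    have h1x2 : (1:ℝ) - x^2 ≠ 0 := by nlinarith
    field_simp
    ring

lemma intable_rpow34 : IntervalIntegrable (fun x : ℝ => (1-x) ^ (-(3:ℝ)/4)) volume 0 1 := by
  have h := (intervalIntegral.intervalIntegrable_rpow' (a := 0) (b := 1) (r := -(3:ℝ)/4)
    (by norm_num)).comp_sub_left 1
  simp only [sub_self, sub_zero] at h
  exact h.symm

lemma G_bound {x : ℝ} (hx : x ∈ Set.Ioo (0:ℝ) 1) :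
    ‖G x‖ ≤ 3315/1024 * ((1-x) ^ (-(3:ℝ)/4) + 4) := by
  obtain ⟨hx0, hx1⟩ := hx
  have h1x : (0:ℝ) < 1 - x := by linarith
  have h1x2 : (0:ℝ) < 1 - x^2 := by nlinarith
  have hxp : (0:ℝ) < 1 + x := by linarith
  have e1 : (1-x) ^ ((1:ℝ)/4) * (x^3/(1-x^2)) = (1-x) ^ (-(3:ℝ)/4) * (x^3/(1+x)) := by
    have hsplit : (1-x) ^ ((1:ℝ)/4) = (1-x) ^ (-(3:ℝ)/4) * (1-x) := by
      rw [show ((1:ℝ)/4) = (-(3:ℝ)/4) + 1 by norm_num, Real.rpow_add h1x, Real.rpow_one]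
    rw [hsplit, show (1:ℝ) - x^2 = (1-x)*(1+x) by ring]
    field_simp
  have b1 : |(1-x) ^ ((1:ℝ)/4) * (x^3/(1-x^2))| ≤ (1-x) ^ (-(3:ℝ)/4) := by
    rw [e1, abs_of_nonneg (by positivity)]
    have hr : (0:ℝ) < (1-x) ^ (-(3:ℝ)/4) := Real.rpow_pos_of_pos h1x _
    have hle : x^3/(1+x) ≤ 1 := by
      rw [div_le_one hxp]
      nlinarith
    nlinarith [mul_le_of_le_one_right hr.le hle]
  have hlogneg : Real.log (1-x^2) ≤ 0 := Real.log_nonpos (by nlinarith) (by nlinarith)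
  have b2 : |(1-x) ^ ((1:ℝ)/4) * x * Real.log (1-x^2)| ≤ 4 := by
    rw [abs_mul, abs_mul]
    have hq : (0:ℝ) < (1-x) ^ ((1:ℝ)/4) := Real.rpow_pos_of_pos h1x _
    have habs2 : |Real.log (1-x^2)| = -Real.log (1-x^2) := abs_of_nonpos hlogneg
    have hmono : -Real.log (1-x^2) ≤ -Real.log (1-x) := by
      have : Real.log (1-x) ≤ Real.log (1-x^2) := Real.log_le_log h1x (by nlinarith)
      linarith
    have hkey : -Real.log (1-x) ≤ 4 * (1-x) ^ (-(1:ℝ)/4) := by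
      have hinv : (0:ℝ) < (1-x)⁻¹ := by positivity
      have h4 : Real.log (((1-x)⁻¹) ^ ((1:ℝ)/4)) ≤ ((1-x)⁻¹) ^ ((1:ℝ)/4) - 1 :=
        Real.log_le_sub_one_of_pos (Real.rpow_pos_of_pos hinv _)
      rw [Real.log_rpow hinv, Real.log_inv] at h4
      have heq : ((1-x)⁻¹) ^ ((1:ℝ)/4) = (1-x) ^ (-(1:ℝ)/4) := by
        rw [show (-(1:ℝ)/4) = -((1:ℝ)/4) by norm_num, Real.rpow_neg h1x.le,
          Real.inv_rpow h1x.le]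
      rw [heq] at h4
      have hp : (0:ℝ) < (1-x) ^ (-(1:ℝ)/4) := Real.rpow_pos_of_pos h1x _
      linarith
    have hmul : (1-x) ^ ((1:ℝ)/4) * (1-x) ^ (-(1:ℝ)/4) = 1 := by
      rw [← Real.rpow_add h1x]
      norm_num
    have hxle : |x| ≤ 1 := by rw [abs_of_nonneg hx0.le]; linarith
    calc |(1-x) ^ ((1:ℝ)/4)| * |x| * |Real.log (1-x^2)|
        ≤ (1-x) ^ ((1:ℝ)/4) * 1 * (4 * (1-x) ^ (-(1:ℝ)/4)) := by
          rw [abs_of_nonneg hq.le]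
          apply mul_le_mul
          · exact mul_le_mul_of_nonneg_left hxle hq.le
          · rw [habs2]; linarith
          · exact abs_nonneg _
          · positivity
      _ = 4 * ((1-x) ^ ((1:ℝ)/4) * (1-x) ^ (-(1:ℝ)/4)) := by ring
      _ = 4 := by rw [hmul]; ring
  rw [G, norm_eq_abs, abs_mul, show |(3315:ℝ)/1024| = 3315/1024 by norm_num]
  have hb : |(1-x) ^ ((1:ℝ)/4) * (x^3/(1-x^2)) - (1-x) ^ ((1:ℝ)/4) * x * Real.log (1-x^2)|
      ≤ (1-x) ^ (-(3:ℝ)/4) + 4 :=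
    le_trans (abs_sub _ _) (add_le_add b1 b2)
  exact mul_le_mul_of_nonneg_left hb (by norm_num)

lemma G_meas : AEStronglyMeasurable G (volume.restrict (Set.Ioo (0:ℝ) 1)) := by
  apply Measurable.aestronglyMeasurable
  apply Measurable.mul measurable_const
  apply Measurable.sub
  · exact (cont_rpow_quarter.measurable).mul
      ((measurable_id.pow_const 3).div (measurable_const.sub (measurable_id.pow_const 2)))
  · exact ((cont_rpow_quarter.measurable).mul measurable_id).mul
      (Real.measurable_log.comp (measurable_const.sub (measurable_id.pow_const 2)))

lemma G_integrable : IntegrableOn G (Set.Ioo (0:ℝ) 1) volume := by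
  have hbound : IntegrableOn (fun x : ℝ => 3315/1024 * ((1-x) ^ (-(3:ℝ)/4) + 4)) (Set.Ioo (0:ℝ) 1) volume := by
    have h1 : IntegrableOn (fun x : ℝ => (1-x) ^ (-(3:ℝ)/4)) (Set.Ioo (0:ℝ) 1) volume := by
      have h := intable_rpow34
      rwa [intervalIntegrable_iff_integrableOn_Ioo_of_le (by norm_num)] at h
    exact (h1.add (integrableOn_const measure_Ioo_lt_top.ne)).const_mul _
  apply Integrable.mono' hbound G_meas
  filter_upwards [ae_restrict_mem measurableSet_Ioo] with x hx
  exact G_bound hx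

lemma term_integral (n : ℕ) :
    (3315/1024 * (((n:ℝ)+2)/((n:ℝ)+1))) * J (2*n+3)
      = ∫ x in Set.Ioo (0:ℝ) 1, (3315/1024 * (((n:ℝ)+2)/((n:ℝ)+1))) * (x ^ (2*n+3) * (1-x) ^ ((1:ℝ)/4)) := by
  rw [MeasureTheory.integral_const_mul]
  congr 1
  rw [J, intervalIntegral.integral_of_le (by norm_num : (0:ℝ) ≤ 1),
    MeasureTheory.integral_Ioc_eq_integral_Ioo]

lemma fterm_nonneg (n : ℕ) {x : ℝ} (hx : x ∈ Set.Ioo (0:ℝ) 1) :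
    0 ≤ (3315/1024 * (((n:ℝ)+2)/((n:ℝ)+1))) * (x ^ (2*n+3) * (1-x) ^ ((1:ℝ)/4)) := by
  obtain ⟨h0, h1⟩ := hx
  have : (0:ℝ) < 1 - x := by linarith
  positivity

lemma fterm_meas (n : ℕ) :
    AEStronglyMeasurable (fun x : ℝ => (3315/1024 * (((n:ℝ)+2)/((n:ℝ)+1))) * (x ^ (2*n+3) * (1-x) ^ ((1:ℝ)/4)))
      (volume.restrict (Set.Ioo (0:ℝ) 1)) :=
  (continuous_const.mul ((continuous_pow _).mul cont_rpow_quarter)).aestronglyMeasurable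

lemma interchange :
    (∑' n : ℕ, (3315/1024 * (((n:ℝ)+2)/((n:ℝ)+1))) * J (2*n+3)) = ∫ x in Set.Ioo (0:ℝ) 1, G x := by
  set μ := volume.restrict (Set.Ioo (0:ℝ) 1) with hμ
  set f : ℕ → ℝ → ℝ := fun n x => (3315/1024 * (((n:ℝ)+2)/((n:ℝ)+1))) * (x ^ (2*n+3) * (1-x) ^ ((1:ℝ)/4)) with hf
  have hmeas : ∀ n, AEStronglyMeasurable (f n) μ := fterm_meas
  have haeIoo : ∀ᵐ x ∂μ, x ∈ Set.Ioo (0:ℝ) 1 := ae_restrict_mem measurableSet_Ioo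
  have hfin : (∑' n, ∫⁻ x, ‖f n x‖₊ ∂μ) ≠ ⊤ := by
    rw [← MeasureTheory.lintegral_tsum (fun n => (hmeas n).aemeasurable.nnnorm.coe_nnreal_ennreal)]
    have hae : (fun x => ∑' n, (‖f n x‖₊ : ENNReal)) =ᵐ[μ] (fun x => ENNReal.ofReal (G x)) := by
      filter_upwards [haeIoo] with x hx
      have hs := hasSum_fterm hx
      have hnn : ∀ n, 0 ≤ f n x := fun n => fterm_nonneg n hx
      have hcoe : ∀ n, (‖f n x‖₊ : ENNReal) = ENNReal.ofReal (f n x) := by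
        intro n
        rw [← enorm_eq_nnnorm, ← ofReal_norm, Real.norm_of_nonneg (hnn n)]
      simp_rw [hcoe]
      rw [← ENNReal.ofReal_tsum_of_nonneg hnn hs.summable, hs.tsum_eq]
    rw [MeasureTheory.lintegral_congr_ae hae]
    exact G_integrable.lintegral_lt_top.ne
  have key := MeasureTheory.integral_tsum hmeas hfin
  have hcongr : (∫ x, (∑' n, f n x) ∂μ) = ∫ x, G x ∂μ := by
    apply MeasureTheory.integral_congr_ae
    filter_upwards [haeIoo] with x hx
    exact (hasSum_fterm hx).tsum_eq
  rw [← hcongr, key]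
  exact tsum_congr (fun n => term_integral n)

noncomputable def H (u : ℝ) : ℝ :=
  4*(u^9/9 - u^5/5 + u)
  - 116/45 * ((Real.arctan (u/cc) + (1/2)*(Real.log (cc+u) - Real.log (cc-u)))/(2*cc^3))
  - 16*(u^4*(1/5 - u^4/9)*(u*Real.log u) - u^5/25 + u^9/81)
  - 4*(u^4*(1/5 - u^4/9)*u)*Real.log (2-u^4)
  - 16*(u^9/81 + u^5/225 + 2*u/45)

noncomputable def F (x : ℝ) : ℝ := -(3315/1024) * H ((1-x) ^ ((1:ℝ)/4))

lemma psi_hasDeriv {u : ℝ} (hu0 : 0 < u) (hu1 : u < 1) :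
    HasDerivAt (fun u => Real.arctan (u/cc) + (1/2)*(Real.log (cc+u) - Real.log (cc-u)))
      (2*cc^3/(2-u^4)) u := by
  have hcp : (0:ℝ) < cc + u := by linarith [cc_pos]
  have hcm : (0:ℝ) < cc - u := by linarith [cc_gt_one]
  have h0 : HasDerivAt (fun u : ℝ => u/cc) (1/cc) u := by
    simpa using (hasDerivAt_id u).div_const cc
  have harc := h0.arctan
  have hlog1 : HasDerivAt (fun u : ℝ => Real.log (cc+u)) (1/(cc+u)) u := by
    have h := ((hasDerivAt_const u cc).add (hasDerivAt_id u)).log hcp.ne'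
    simpa using h
  have hlog2 : HasDerivAt (fun u : ℝ => Real.log (cc-u)) (-(1/(cc-u))) u := by
    have h := ((hasDerivAt_const u cc).sub (hasDerivAt_id u)).log hcm.ne'
    refine h.congr_deriv ?_
    simp only [Pi.sub_apply, id_eq, zero_sub]
    field_simp
  have hsum := harc.add ((hlog1.sub hlog2).const_mul (1/2))
  refine hsum.congr_deriv ?_
  have hprod : (cc^2+u^2)*(cc^2-u^2) = 2-u^4 := by linear_combination cc_pow4
  have hne1 : cc^2+u^2 ≠ 0 := by positivity
  have hne2 : cc^2-u^2 ≠ 0 := by nlinarith [cc_gt_one]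
  have hccne : cc ≠ 0 := cc_pos.ne'
  rw [← hprod]
  field_simp
  ring


lemma H_hasDeriv {u : ℝ} (hu0 : 0 < u) (hu1 : u < 1) :
    HasDerivAt H
      (4*(1-u^4)^3/(2-u^4) - 16*(u^4-u^8)*Real.log u - 4*(u^4-u^8)*Real.log (2-u^4)) u := by
  have hu4 : u^4 < 1 := pow_lt_one₀ hu0.le hu1 (by norm_num)
  have h2u : (0:ℝ) < 2 - u^4 := by linarith
  have hT1 : HasDerivAt (fun u : ℝ => 4*(u^9/9 - u^5/5 + u))
      (4*(((9:ℕ):ℝ)*u^8/9 - ((5:ℕ):ℝ)*u^4/5 + 1)) u := by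
    have h2 := ((((hasDerivAt_pow 9 u).div_const 9).sub ((hasDerivAt_pow 5 u).div_const 5)).add
      (hasDerivAt_id u)).const_mul (4:ℝ)
    refine h2.congr_deriv ?_ <;> (push_cast; ring)
  have hT2 : HasDerivAt (fun u : ℝ =>
      116/45 * ((Real.arctan (u/cc) + (1/2)*(Real.log (cc+u) - Real.log (cc-u)))/(2*cc^3)))
      (116/45 * ((2*cc^3/(2-u^4))/(2*cc^3))) u :=
    ((psi_hasDeriv hu0 hu1).div_const (2*cc^3)).const_mul (116/45)
  have hinner1 : HasDerivAt (fun u : ℝ => u^4*(1/5 - u^4/9))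
      (((4:ℕ):ℝ)*u^3*(1/5 - u^4/9) + u^4*(-(((4:ℕ):ℝ)*u^3/9))) u := by
    have h := (hasDerivAt_pow 4 u).mul
      ((hasDerivAt_const u (1/5:ℝ)).sub ((hasDerivAt_pow 4 u).div_const 9))
    refine h.congr_deriv ?_ <;> (push_cast [Pi.sub_apply]; ring)
  have hinner2 : HasDerivAt (fun u : ℝ => u*Real.log u) (1*Real.log u + u*u⁻¹) u :=
    (hasDerivAt_id u).mul (Real.hasDerivAt_log hu0.ne')
  have hT3 : HasDerivAt (fun u : ℝ => 16*(u^4*(1/5 - u^4/9)*(u*Real.log u) - u^5/25 + u^9/81))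
      (16*(((((4:ℕ):ℝ)*u^3*(1/5 - u^4/9) + u^4*(-(((4:ℕ):ℝ)*u^3/9)))*(u*Real.log u)
          + u^4*(1/5 - u^4/9)*(1*Real.log u + u*u⁻¹))
        - ((5:ℕ):ℝ)*u^4/25 + ((9:ℕ):ℝ)*u^8/81)) u := by
    have h := (((hinner1.mul hinner2).sub ((hasDerivAt_pow 5 u).div_const 25)).add
      ((hasDerivAt_pow 9 u).div_const 81)).const_mul (16:ℝ)
    refine h.congr_deriv ?_ <;> (push_cast; ring)
  have hlog3 : HasDerivAt (fun u : ℝ => Real.log (2-u^4)) ((-(((4:ℕ):ℝ)*u^3))/(2-u^4)) u := by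
    have h := ((hasDerivAt_const u (2:ℝ)).sub (hasDerivAt_pow 4 u)).log h2u.ne'
    refine h.congr_deriv ?_ <;> (push_cast [Pi.sub_apply]; ring)
  have hp : HasDerivAt (fun u : ℝ => 4*(u^4*(1/5 - u^4/9)*u))
      (4*((((4:ℕ):ℝ)*u^3*(1/5 - u^4/9) + u^4*(-(((4:ℕ):ℝ)*u^3/9)))*u + u^4*(1/5 - u^4/9)*1)) u :=
    (hinner1.mul (hasDerivAt_id u)).const_mul (4:ℝ)
  have hT4 : HasDerivAt (fun u : ℝ => 4*(u^4*(1/5 - u^4/9)*u)*Real.log (2-u^4))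
      ((4*((((4:ℕ):ℝ)*u^3*(1/5 - u^4/9) + u^4*(-(((4:ℕ):ℝ)*u^3/9)))*u + u^4*(1/5 - u^4/9)*1))*Real.log (2-u^4)
        + (4*(u^4*(1/5 - u^4/9)*u))*((-(((4:ℕ):ℝ)*u^3))/(2-u^4))) u :=
    hp.mul hlog3
  have hT5 : HasDerivAt (fun u : ℝ => 16*(u^9/81 + u^5/225 + 2*u/45))
      (16*(((9:ℕ):ℝ)*u^8/81 + ((5:ℕ):ℝ)*u^4/225 + 2*1/45)) u := by
    have h := ((((hasDerivAt_pow 9 u).div_const 81).add ((hasDerivAt_pow 5 u).div_const 225)).add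
      (((hasDerivAt_id u).const_mul (2:ℝ)).div_const 45)).const_mul (16:ℝ)
    refine h.congr_deriv ?_ <;> (push_cast; ring)
  have hH := (((hT1.sub hT2).sub hT3).sub hT4).sub hT5
  have hHfun : H = fun u : ℝ =>
      4*(u^9/9 - u^5/5 + u)
      - 116/45 * ((Real.arctan (u/cc) + (1/2)*(Real.log (cc+u) - Real.log (cc-u)))/(2*cc^3))
      - 16*(u^4*(1/5 - u^4/9)*(u*Real.log u) - u^5/25 + u^9/81)
      - 4*(u^4*(1/5 - u^4/9)*u)*Real.log (2-u^4)
      - 16*(u^9/81 + u^5/225 + 2*u/45) := rfl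
  rw [hHfun]
  refine hH.congr_deriv ?_
  have hccne : cc ≠ 0 := cc_pos.ne'
  push_cast
  field_simp
  ring

lemma u_pow4 {x : ℝ} (hx0 : 0 < x) (hx1 : x < 1) : ((1-x) ^ ((1:ℝ)/4))^4 = 1 - x := by
  have h1x : (0:ℝ) ≤ 1 - x := by linarith
  rw [← Real.rpow_natCast ((1-x) ^ ((1:ℝ)/4)) 4, ← Real.rpow_mul h1x]
  norm_num

lemma F_deriv {x : ℝ} (hx : x ∈ Set.Ioo (0:ℝ) 1) : HasDerivAt F (G x) x := by
  obtain ⟨hx0, hx1⟩ := hx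
  have h1x : (0:ℝ) < 1 - x := by linarith
  set u : ℝ := (1-x) ^ ((1:ℝ)/4) with hu
  have hu0 : 0 < u := Real.rpow_pos_of_pos h1x _
  have hu1 : u < 1 := by
    rw [hu]
    exact Real.rpow_lt_one h1x.le (by linarith) (by norm_num)
  have hu4 : u^4 = 1 - x := u_pow4 hx0 hx1
  -- derivative of inner function
  have hrw : HasDerivAt (fun x : ℝ => (1-x) ^ ((1:ℝ)/4))
      (-1 * ((1:ℝ)/4) * (1-x) ^ ((1:ℝ)/4 - 1)) x := by
    have hbase : HasDerivAt (fun x : ℝ => 1 - x) (-1) x := by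
      simpa using (hasDerivAt_id' x).const_sub (1:ℝ)
    exact hbase.rpow_const (Or.inl h1x.ne')
  have hcomp := ((H_hasDeriv hu0 hu1).comp x hrw).const_mul (-(3315/1024) : ℝ)
  have hF : F = fun x : ℝ => -(3315/1024) * H ((1-x) ^ ((1:ℝ)/4)) := rfl
  rw [hF]
  refine hcomp.congr_deriv ?_
  -- now the algebraic identity
  have hum : (1-x) ^ ((1:ℝ)/4 - 1) = (u^3)⁻¹ := by
    have h3 : u^3 = (1-x) ^ ((3:ℝ)/4) := by
      rw [hu, ← Real.rpow_natCast ((1-x) ^ ((1:ℝ)/4)) 3, ← Real.rpow_mul h1x.le]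
      norm_num
    rw [h3, ← Real.rpow_neg h1x.le]
    norm_num
  have hx2 : 1 - x^2 = u^4*(2-u^4) := by rw [hu4]; ring
  have hlog : Real.log (1-x^2) = 4*Real.log u + Real.log (2-u^4) := by
    have h2u : (0:ℝ) < 2 - u^4 := by rw [hu4]; linarith
    rw [hx2, Real.log_mul (by positivity) h2u.ne', Real.log_pow]
    push_cast
    ring
  have h2u : (0:ℝ) < 2 - u^4 := by rw [hu4]; linarith
  have hGx : G x = 3315/1024 * (u * ((1-u^4)^3/(u^4*(2-u^4))) - u * (1-u^4) * (4*Real.log u + Real.log (2-u^4))) := by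
    rw [G, ← hu, ← hlog, hx2, hu4]
    ring
  rw [hGx, hum]
  have hu3 : (u:ℝ)^3 ≠ 0 := by positivity
  have hu4' : (u:ℝ)^4 ≠ 0 := by positivity
  field_simp
  ring

lemma H_contOn : ContinuousOn H (Set.Icc (0:ℝ) 1) := by
  have hmul : H = fun u : ℝ =>
      4*(u^9/9 - u^5/5 + u)
      - 116/45 * ((Real.arctan (u/cc) + (1/2)*(Real.log (cc+u) - Real.log (cc-u)))/(2*cc^3))
      - 16*(u^4*(1/5 - u^4/9)*(u*Real.log u) - u^5/25 + u^9/81)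
      - 4*(u^4*(1/5 - u^4/9)*u)*Real.log (2-u^4)
      - 16*(u^9/81 + u^5/225 + 2*u/45) := rfl
  rw [hmul]
  intro u hu
  obtain ⟨hu0, hu1⟩ := hu
  have hcp : (0:ℝ) < cc + u := by linarith [cc_pos]
  have hcm : (0:ℝ) < cc - u := by linarith [cc_gt_one]
  have h2u : (0:ℝ) < 2 - u^4 := by nlinarith [pow_le_one₀ hu0 hu1 (n := 4)]
  apply ContinuousAt.continuousWithinAt
  have c1 : ContinuousAt (fun u : ℝ => 4*(u^9/9 - u^5/5 + u)) u := by fun_prop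
  have c2 : ContinuousAt (fun u : ℝ =>
      116/45 * ((Real.arctan (u/cc) + (1/2)*(Real.log (cc+u) - Real.log (cc-u)))/(2*cc^3))) u := by
    apply ContinuousAt.mul continuousAt_const
    apply ContinuousAt.div _ continuousAt_const (mul_pos two_pos (pow_pos cc_pos 3)).ne' 
    apply ContinuousAt.add
    · exact Real.continuous_arctan.continuousAt.comp (by fun_prop)
    · apply ContinuousAt.mul continuousAt_const
      apply ContinuousAt.sub
      · exact ContinuousAt.log (by fun_prop) hcp.ne'
      · exact ContinuousAt.log (by fun_prop) hcm.ne' 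
  have cml : ContinuousAt (fun u : ℝ => u*Real.log u) u :=
    (Real.continuous_mul_log).continuousAt
  have c3 : ContinuousAt (fun u : ℝ => 16*(u^4*(1/5 - u^4/9)*(u*Real.log u) - u^5/25 + u^9/81)) u := by
    apply ContinuousAt.mul continuousAt_const
    apply ContinuousAt.add
    apply ContinuousAt.sub
    · exact ContinuousAt.mul (by fun_prop) cml
    all_goals fun_prop
  have c4 : ContinuousAt (fun u : ℝ => 4*(u^4*(1/5 - u^4/9)*u)*Real.log (2-u^4)) u := by
    apply ContinuousAt.mul (by fun_prop)
    exact ContinuousAt.log (by fun_prop) h2u.ne' 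
  have c5 : ContinuousAt (fun u : ℝ => 16*(u^9/81 + u^5/225 + 2*u/45)) u := by fun_prop
  exact (((c1.sub c2).sub c3).sub c4).sub c5

lemma F_contOn : ContinuousOn F (Set.Icc (0:ℝ) 1) := by
  have hF : F = fun x : ℝ => -(3315/1024) * H ((1-x) ^ ((1:ℝ)/4)) := rfl
  rw [hF]
  apply ContinuousOn.mul continuousOn_const
  apply H_contOn.comp
  · intro x _
    exact ((continuousAt_const.sub continuousAt_id).rpow_const (Or.inr (by norm_num))).continuousWithinAt
  · intro x hx
    obtain ⟨hx0, hx1⟩ := hx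
    exact ⟨Real.rpow_nonneg (by linarith) _,
      Real.rpow_le_one (by linarith) (by linarith) (by norm_num)⟩

lemma H_zero : H 0 = 0 := by
  have : H 0 = 4*((0:ℝ)^9/9 - 0^5/5 + 0)
      - 116/45 * ((Real.arctan (0/cc) + (1/2)*(Real.log (cc+0) - Real.log (cc-0)))/(2*cc^3))
      - 16*((0:ℝ)^4*(1/5 - 0^4/9)*(0*Real.log 0) - 0^5/25 + 0^9/81)
      - 4*((0:ℝ)^4*(1/5 - 0^4/9)*0)*Real.log (2-0^4)
      - 16*((0:ℝ)^9/81 + 0^5/225 + 2*0/45) := rfl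
  rw [this]
  norm_num

lemma integral_G_eq : (∫ x in Set.Ioo (0:ℝ) 1, G x) = 3315/1024 * H 1 := by
  have hle : (0:ℝ) ≤ 1 := by norm_num
  have hint : IntervalIntegrable G volume 0 1 := by
    rw [intervalIntegrable_iff_integrableOn_Ioo_of_le hle]
    exact G_integrable
  have hftc := intervalIntegral.integral_eq_sub_of_hasDeriv_right_of_le hle F_contOn
    (fun x hx => (F_deriv hx).hasDerivWithinAt) hint
  have h1 : (∫ x in Set.Ioo (0:ℝ) 1, G x) = ∫ x in (0:ℝ)..1, G x := by
    rw [intervalIntegral.integral_of_le hle, MeasureTheory.integral_Ioc_eq_integral_Ioo]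
  rw [h1, hftc]
  have hF1 : F 1 = 0 := by
    have h : F 1 = -(3315/1024) * H ((1-(1:ℝ)) ^ ((1:ℝ)/4)) := rfl
    have h11 : ((1:ℝ)-1) ^ ((1:ℝ)/4) = 0 := by
      rw [sub_self, Real.zero_rpow (by norm_num)]
    rw [h, h11, H_zero]
    ring
  have hF0 : F 0 = -(3315/1024) * H 1 := by
    have h : F 0 = -(3315/1024) * H ((1-(0:ℝ)) ^ ((1:ℝ)/4)) := rfl
    have h10 : ((1:ℝ)-0) ^ ((1:ℝ)/4) = 1 := by
      rw [sub_zero, Real.one_rpow]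
    rw [h, h10]
  rw [hF1, hF0]
  ring

lemma final_eq : 3315/1024 * H 1 =
    221/276480 * (12584 - 1305*cc*Real.pi
      - 2610*cc*((1/2)*(Real.log (cc+1) - Real.log (cc-1))) + 2610*cc*Real.arctan cc) := by
  have hH1 : H 1 = 4*((1:ℝ)^9/9 - 1^5/5 + 1)
      - 116/45 * ((Real.arctan (1/cc) + (1/2)*(Real.log (cc+1) - Real.log (cc-1)))/(2*cc^3))
      - 16*((1:ℝ)^4*(1/5 - 1^4/9)*(1*Real.log 1) - 1^5/25 + 1^9/81)
      - 4*((1:ℝ)^4*(1/5 - 1^4/9)*1)*Real.log (2-1^4)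
      - 16*((1:ℝ)^9/81 + 1^5/225 + 2*1/45) := rfl
  have harc : Real.arctan (1/cc) = Real.pi/2 - Real.arctan cc := by
    rw [one_div]
    exact Real.arctan_inv_of_pos cc_pos
  have hinv : (2*cc^3)⁻¹ = cc/4 := by
    have hccne : cc ≠ 0 := cc_pos.ne'
    rw [eq_div_iff (by norm_num : (4:ℝ) ≠ 0), inv_mul_eq_div, div_eq_iff (by positivity)]
    linear_combination (-2 : ℝ) * cc_pow4
  rw [hH1, harc]
  rw [div_eq_mul_inv _ (2*cc^3), hinv]
  norm_num [Real.log_one]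
  ring

end HypAux

theorem stmt_15 :
    ∑' n : ℕ, (poch (1) n * poch (1) n * poch (5/2) n * poch (3) n) / (poch (2) n * poch (21/8) n * poch (25/8) n * (Nat.factorial n : ℝ)) * (1 : ℝ) ^ n
      = 221/276480 * (12584 - 1305 * (2:ℝ) ^ ((1:ℝ)/4) * Real.pi
          - 2610 * (2:ℝ) ^ ((1:ℝ)/4) * arcoth ((2:ℝ) ^ ((1:ℝ)/4))
          + 2610 * (2:ℝ) ^ ((1:ℝ)/4) * Real.arctan ((2:ℝ) ^ ((1:ℝ)/4))) := by
  have hterm : ∀ n : ℕ,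
      (poch (1) n * poch (1) n * poch (5/2) n * poch (3) n) /
        (poch (2) n * poch (21/8) n * poch (25/8) n * (Nat.factorial n : ℝ)) * (1 : ℝ) ^ n
      = (3315/1024 * (((n:ℝ)+2)/((n:ℝ)+1))) * HypAux.J (2*n+3) := by
    intro n
    rw [one_pow, mul_one, HypAux.term_eq]
  rw [tsum_congr hterm, HypAux.interchange, HypAux.integral_G_eq]
  have hccrw : ((2:ℝ) ^ ((1:ℝ)/4)) = HypAux.cc := rfl
  have hcm : (0:ℝ) < HypAux.cc - 1 := by linarith [HypAux.cc_gt_one]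
  have hcp : (0:ℝ) < HypAux.cc + 1 := by linarith [HypAux.cc_pos]
  have harcoth : arcoth HypAux.cc = (1/2)*(Real.log (HypAux.cc+1) - Real.log (HypAux.cc-1)) := by
    rw [arcoth, Real.log_div hcp.ne' hcm.ne']
  rw [hccrw, harcoth, HypAux.final_eq]
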